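/- Let a = [a_1,...,a_r] and b = [a_{r+1},...,a_s] be finite continued fractions with positive integer partial quotients, and let I_a, I_b, I_{a,b} denote the cf-ary intervals determined by the digit sequences (a_1,...,a_r), (a_{r+1},...,a_s), and their concatenation (a_1,...,a_s) respectively. Then |I_b|/2 ≤ |I_{a,b}|/|I_a| ≤ 2|I_b|, where |·| denotes Lebesgue measure (interval length). -/

import Mathlib

open MeasureTheory

/-- The continuant of a finite list of partial quotients: for `[a₁,...,aₙ]` it equals `qₙ`,
where `q₋₁ = 0`, `q₀ = 1`, `qₙ = aₙ qₙ₋₁ + qₙ₋₂`. -/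
def contK : List ℕ → ℕ
  | [] => 1
  | [a] => a
  | a :: b :: l => a * contK (b :: l) + contK l

/-- The value of the finite continued fraction `[a₁,...,aₙ] = 1/(a₁ + 1/(a₂ + ⋯ + 1/aₙ))`. -/
noncomputable def cfVal : List ℕ → ℝ
  | [] => 0
  | a :: l => 1 / (a + cfVal l)

/-- The list with its last entry incremented by one. -/
def succLast : List ℕ → List ℕ
  | [] => []
  | [a] => [a + 1]
  | a :: b :: l => a :: succLast (b :: l)

/-- The cf-ary interval `I_{[a₁,...,aₙ]}`: the open interval with endpoints
`[a₁,...,aₙ]` and `[a₁,...,aₙ+1]`, i.e. the set of numbers whose continued fraction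
expansion begins with `a₁,...,aₙ`. -/
noncomputable def cfInterval (u : List ℕ) : Set ℝ :=
  Set.Ioo (min (cfVal u) (cfVal (succLast u))) (max (cfVal u) (cfVal (succLast u)))

lemma contK_cons' (a : ℕ) (v : List ℕ) (hv : v ≠ []) :
    contK (a :: v) = a * contK v + contK v.tail := by
  cases v with
  | nil => exact absurd rfl hv
  | cons b t => rfl

lemma contK_pos : ∀ (l : List ℕ), (∀ x ∈ l, 0 < x) → 0 < contK l
  | [], _ => Nat.one_pos
  | [a], h => h a (by simp)
  | a :: b :: t, h => by
      have h1 := contK_pos (b :: t) (fun x hx => h x (by simp [hx]))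
      have ha := h a (by simp)
      simp only [contK]
      positivity

lemma contK_tail_le : ∀ (l : List ℕ), (∀ x ∈ l, 0 < x) → contK l.tail ≤ contK l
  | [], _ => le_refl _
  | [a], h => by show 1 ≤ a; exact h a (by simp)
  | a :: b :: t, h => by
      have ha : 1 ≤ a := h a (by simp)
      show contK (b :: t) ≤ a * contK (b :: t) + contK t
      nlinarith [contK (b :: t), contK t]

lemma contK_dropLast_le : ∀ (l : List ℕ), (∀ x ∈ l, 0 < x) → contK l.dropLast ≤ contK l
  | [], _ => le_refl _
  | [a], h => by show 1 ≤ a; exact h a (by simp)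
  | a :: b :: t, h => by
      have h1 := contK_dropLast_le (b :: t) (fun x hx => h x (by simp [hx]))
      have h2 := contK_dropLast_le t (fun x hx => h x (by simp [hx]))
      have ha : 1 ≤ a := h a (by simp)
      have hd : (a :: b :: t).dropLast = a :: (b :: t).dropLast := by
        simp [List.dropLast]
      rw [hd]
      cases t with
      | nil =>
        show contK [a] ≤ a * contK [b] + contK []
        have hb : 1 ≤ b := h b (by simp)
        show a ≤ a * b + 1
        nlinarith
      | cons c s =>
        have hd2 : (b :: c :: s).dropLast = b :: (c :: s).dropLast := by
          simp [List.dropLast]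
        rw [hd2]
        rw [hd2] at h1
        show a * contK (b :: (c :: s).dropLast) + contK ((c :: s).dropLast) ≤
          a * contK (b :: c :: s) + contK (c :: s)
        gcongr

lemma succLast_ne_nil : ∀ (l : List ℕ), l ≠ [] → succLast l ≠ []
  | [a], _ => by simp [succLast]
  | a :: b :: t, _ => by simp [succLast]

lemma succLast_pos : ∀ (l : List ℕ), (∀ x ∈ l, 0 < x) → ∀ x ∈ succLast l, 0 < x
  | [], _ => by simp [succLast]
  | [a], h => by
      intro x hx
      simp [succLast] at hx
      omega
  | a :: b :: t, h => by
      intro x hx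
      simp only [succLast, List.mem_cons] at hx
      rcases hx with rfl | hx
      · exact h _ (by simp)
      · exact succLast_pos (b :: t) (fun y hy => h y (by simp [hy])) x hx

lemma contK_succLast : ∀ (l : List ℕ), l ≠ [] →
    contK (succLast l) = contK l + contK l.dropLast
  | [a], _ => by simp [succLast, contK]
  | a :: b :: t, _ => by
      have ih := contK_succLast (b :: t) (by simp)
      have hne := succLast_ne_nil (b :: t) (by simp)
      show contK (a :: succLast (b :: t)) = contK (a :: b :: t) + contK ((a :: b :: t).dropLast)
      rw [contK_cons' a _ hne, ih]
      have hd : (a :: b :: t).dropLast = a :: (b :: t).dropLast := by simp [List.dropLast]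
      rw [hd]
      cases t with
      | nil =>
        simp [succLast, contK]
        ring
      | cons c s =>
        have ht : succLast (b :: c :: s) = b :: succLast (c :: s) := rfl
        have ih2 := contK_succLast (c :: s) (by simp)
        have hne2 := succLast_ne_nil (c :: s) (by simp)
        rw [ht]
        show a * (contK (b :: c :: s) + contK ((b :: c :: s).dropLast)) + contK (succLast (c :: s))
          = contK (a :: b :: c :: s) + contK (a :: (b :: c :: s).dropLast)
        have hd2 : (b :: c :: s).dropLast = b :: (c :: s).dropLast := by simp [List.dropLast]
        rw [ih2, hd2]
        rw [contK_cons' a (b :: (c :: s).dropLast) (by simp)]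
        show a * (contK (b :: c :: s) + contK (b :: (c :: s).dropLast)) + (contK (c :: s) + contK ((c :: s).dropLast))
          = (a * contK (b :: c :: s) + contK (c :: s)) + (a * contK (b :: (c :: s).dropLast) + contK ((c :: s).dropLast))
        ring

lemma cfVal_nonneg : ∀ (l : List ℕ), 0 ≤ cfVal l
  | [] => le_refl _
  | a :: v => by
      have := cfVal_nonneg v
      show (0:ℝ) ≤ 1 / (a + cfVal v)
      positivity

lemma cfVal_eq : ∀ (l : List ℕ), (∀ x ∈ l, 0 < x) → l ≠ [] →
    cfVal l = contK l.tail / contK l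
  | [a], h, _ => by
      show 1 / ((a:ℝ) + cfVal []) = contK [] / contK [a]
      show 1 / ((a:ℝ) + 0) = (1:ℕ) / (contK [a] : ℝ)
      simp [contK]
  | a :: b :: t, h, _ => by
      have ih := cfVal_eq (b :: t) (fun x hx => h x (by simp [hx])) (by simp)
      have hKpos : 0 < contK (b :: t) := contK_pos _ (fun x hx => h x (by simp [hx]))
      have hKpos2 : 0 < contK (a :: b :: t) := contK_pos _ h
      show 1 / ((a:ℝ) + cfVal (b :: t)) = contK (b :: t) / contK (a :: b :: t)
      rw [ih]
      have hcont : (contK (a :: b :: t) : ℝ) = a * contK (b :: t) + contK ((b :: t).tail) := by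
        rw [contK_cons' a _ (by simp)]; push_cast; rfl
      have key : (a:ℝ) + (contK ((b :: t).tail) : ℝ) / contK (b :: t)
          = (contK (a :: b :: t) : ℝ) / contK (b :: t) := by
        rw [hcont]; field_simp
      rw [key, one_div_div]

lemma succLast_append : ∀ (u w : List ℕ), w ≠ [] → succLast (u ++ w) = u ++ succLast w
  | [], w, _ => rfl
  | a :: v, w, hw => by
      have ih := succLast_append v w hw
      show succLast (a :: (v ++ w)) = a :: (v ++ succLast w)
      cases hvw : v ++ w with
      | nil => exact absurd (List.append_eq_nil_iff.mp hvw).2 hw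
      | cons c m =>
        show a :: succLast (c :: m) = a :: (v ++ succLast w)
        rw [← hvw, ih]

lemma cf_det : ∀ (l : List ℕ), l ≠ [] →
    (contK ((succLast l).tail) : ℤ) * contK l - contK l.tail * contK (succLast l)
      = (-1) ^ l.length
  | [a], _ => by
      show (contK [] : ℤ) * contK [a] - contK [] * contK [a+1] = (-1)^1
      show ((1:ℕ) : ℤ) * a - ((1:ℕ):ℤ) * (a+1) = (-1)^1
      push_cast; ring
  | a :: b :: t, _ => by
      have ih := cf_det (b :: t) (by simp)
      have hne := succLast_ne_nil (b :: t) (by simp)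
      have h1 : contK (a :: b :: t) = a * contK (b :: t) + contK ((b :: t).tail) := rfl
      have h2 : contK (a :: succLast (b :: t))
          = a * contK (succLast (b :: t)) + contK ((succLast (b :: t)).tail) :=
        contK_cons' a _ hne
      show (contK ((a :: succLast (b :: t)).tail) : ℤ) * contK (a :: b :: t)
          - contK (b :: t) * contK (a :: succLast (b :: t)) = (-1) ^ (t.length + 2)
      show (contK (succLast (b :: t)) : ℤ) * contK (a :: b :: t)
          - contK (b :: t) * contK (a :: succLast (b :: t)) = (-1) ^ (t.length + 2)
      rw [h1, h2]
      push_cast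
      have : ((-1:ℤ)) ^ (t.length + 2) = -(-1) ^ (b :: t).length := by
        simp [List.length_cons]; ring
      rw [this, ← ih]
      ring

lemma contK_append : ∀ (u w : List ℕ), u ≠ [] → w ≠ [] →
    contK (u ++ w) = contK u * contK w + contK u.dropLast * contK w.tail
  | [a], w, _, hw => by
      show contK (a :: w) = contK [a] * contK w + contK [] * contK w.tail
      rw [contK_cons' a w hw]
      show a * contK w + contK w.tail = a * contK w + 1 * contK w.tail
      ring
  | a :: b :: t, w, _, hw => by
      have ih1 := contK_append (b :: t) w (by simp) hw
      have h0 : (a :: b :: t) ++ w = a :: b :: (t ++ w) := rfl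
      have h1 : contK (a :: b :: (t ++ w)) = a * contK (b :: (t ++ w)) + contK (t ++ w) := rfl
      rw [h0, h1]
      have hbw : b :: (t ++ w) = (b :: t) ++ w := rfl
      rw [hbw, ih1]
      cases t with
      | nil =>
        show a * (contK [b] * contK w + contK [] * contK w.tail) + contK w
          = contK [a, b] * contK w + contK ((a :: [b]).dropLast) * contK w.tail
        show a * (b * contK w + 1 * contK w.tail) + contK w
          = (a * b + 1) * contK w + contK [a] * contK w.tail
        show a * (b * contK w + 1 * contK w.tail) + contK w
          = (a * b + 1) * contK w + a * contK w.tail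
        ring
      | cons c s =>
        have ih2 := contK_append (c :: s) w (by simp) hw
        rw [ih2]
        have hd : (a :: b :: c :: s).dropLast = a :: b :: (c :: s).dropLast := by
          simp [List.dropLast]
        rw [hd]
        have hd2 : (b :: c :: s).dropLast = b :: (c :: s).dropLast := by
          simp [List.dropLast]
        rw [hd2]
        have e1 : contK (a :: b :: c :: s) = a * contK (b :: c :: s) + contK (c :: s) := rfl
        have e2 : contK (a :: b :: (c :: s).dropLast)
            = a * contK (b :: (c :: s).dropLast) + contK ((c :: s).dropLast) := rfl
        rw [e1, e2]
        ring

lemma volume_cfInterval (l : List ℕ) (h : ∀ x ∈ l, 0 < x) (hn : l ≠ []) :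
    (volume (cfInterval l)).toReal = 1 / (contK l * contK (succLast l)) := by
  have hK : 0 < contK l := contK_pos l h
  have hK' : 0 < contK (succLast l) := contK_pos _ (succLast_pos l h)
  have hval := cfVal_eq l h hn
  have hval' := cfVal_eq (succLast l) (succLast_pos l h) (succLast_ne_nil l hn)
  have hdet := cf_det l hn
  have hKR : (0:ℝ) < contK l := by exact_mod_cast hK
  have hKR' : (0:ℝ) < contK (succLast l) := by exact_mod_cast hK'
  have hdetR : (contK ((succLast l).tail) : ℝ) * contK l
      - contK l.tail * contK (succLast l) = (-1) ^ l.length := by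
    exact_mod_cast hdet
  rw [cfInterval, Real.volume_Ioo, ENNReal.toReal_ofReal
    (by rw [sub_nonneg]; exact min_le_max)]
  rw [max_sub_min_eq_abs]
  have hdiff : cfVal l - cfVal (succLast l)
      = -((-1:ℝ) ^ l.length) / (contK l * contK (succLast l)) := by
    rw [hval, hval', div_sub_div _ _ (ne_of_gt hKR) (ne_of_gt hKR'), ← hdetR]
    ring_nf
  rw [abs_sub_comm, hdiff, abs_div, abs_neg, abs_pow, abs_neg, abs_one, one_pow,
    abs_of_pos (by positivity)]

theorem cf_interval_relative_length (u w : List ℕ)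
    (hu : ∀ x ∈ u, 0 < x) (hw : ∀ x ∈ w, 0 < x)
    (hun : u ≠ []) (hwn : w ≠ []) :
    (volume (cfInterval w)).toReal / 2 ≤
        (volume (cfInterval (u ++ w))).toReal / (volume (cfInterval u)).toReal ∧
      (volume (cfInterval (u ++ w))).toReal / (volume (cfInterval u)).toReal ≤
        2 * (volume (cfInterval w)).toReal := by
  have huw : ∀ x ∈ u ++ w, 0 < x := by
    intro x hx
    rcases List.mem_append.mp hx with hx | hx
    · exact hu x hx
    · exact hw x hx
  have huwn : u ++ w ≠ [] := by simp [hun]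
  have hswn := succLast_ne_nil w hwn
  have hswp := succLast_pos w hw
  rw [volume_cfInterval u hu hun, volume_cfInterval w hw hwn,
    volume_cfInterval (u ++ w) huw huwn]
  set A := contK u with hA
  set A' := contK u.dropLast with hA'
  set Ap := contK (succLast u) with hApdef
  set B := contK w with hB
  set Bp := contK (succLast w) with hBp
  set C := contK w.tail with hC
  set Cp := contK ((succLast w).tail) with hCp
  set M := contK (u ++ w) with hM
  set Mp := contK (succLast (u ++ w)) with hMp
  have eM : M = A * B + A' * C := contK_append u w hun hwn
  have eMp : Mp = A * Bp + A' * Cp := by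
    rw [hMp, succLast_append u w hwn]
    exact contK_append u (succLast w) hun hswn
  have eAp : Ap = A + A' := contK_succLast u hun
  have hA'le : A' ≤ A := contK_dropLast_le u hu
  have hCle : C ≤ B := contK_tail_le w hw
  have hCple : Cp ≤ Bp := contK_tail_le (succLast w) hswp
  have hApos : 0 < A := contK_pos u hu
  have hBpos : 0 < B := contK_pos w hw
  have hBppos : 0 < Bp := contK_pos _ hswp
  have hAppos : 0 < Ap := contK_pos _ (succLast_pos u hu)
  have hMpos : 0 < M := contK_pos _ huw
  have hMppos : 0 < Mp := by
    rw [hMp]; exact contK_pos _ (succLast_pos _ huw)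
  clear_value A A' Ap B Bp C Cp M Mp
  clear hA hA' hApdef hB hBp hC hCp hM hMp
  have e1 : A * A' * (B * Cp) ≤ A * A' * (B * Bp) := by gcongr
  have e2 : A * A' * (C * Bp) ≤ A * A' * (B * Bp) := by gcongr
  have e3 : A' * A' * (C * Cp) ≤ A * A * (B * Bp) := by gcongr
  have e4 : A' * A * (B * Bp) ≤ A * A * (B * Bp) := by gcongr
  have key1 : M * Mp ≤ 2 * (A * Ap * (B * Bp)) := by
    rw [eM, eMp, eAp]; nlinarith [e1, e2, e3, e4]
  have key2 : A * Ap * (B * Bp) ≤ 2 * (M * Mp) := by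
    rw [eM, eMp, eAp]
    nlinarith [e4, Nat.zero_le (A * B * (A' * Cp)), Nat.zero_le (A' * C * (A * Bp)),
      Nat.zero_le (A' * C * (A' * Cp))]
  have hAR : (0:ℝ) < A := by exact_mod_cast hApos
  have hApR : (0:ℝ) < Ap := by exact_mod_cast hAppos
  have hBR : (0:ℝ) < B := by exact_mod_cast hBpos
  have hBpR : (0:ℝ) < Bp := by exact_mod_cast hBppos
  have hMR : (0:ℝ) < M := by exact_mod_cast hMpos
  have hMpR : (0:ℝ) < Mp := by exact_mod_cast hMppos
  have key1R : (M:ℝ) * Mp ≤ 2 * ((A:ℝ) * Ap * ((B:ℝ) * Bp)) := by exact_mod_cast key1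
  have key2R : (A:ℝ) * Ap * ((B:ℝ) * Bp) ≤ 2 * ((M:ℝ) * Mp) := by exact_mod_cast key2
  have emid : (1 / ((M:ℝ) * Mp)) / (1 / ((A:ℝ) * Ap)) = ((A:ℝ) * Ap) / ((M:ℝ) * Mp) := by
    field_simp
  rw [emid]
  constructor
  · rw [div_div, div_le_div_iff₀ (mul_pos (mul_pos hBR hBpR) two_pos) (mul_pos hMR hMpR)]
    linarith [key1R]
  · rw [mul_one_div, div_le_div_iff₀ (mul_pos hMR hMpR) (mul_pos hBR hBpR)]
    linarith [key2R]
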